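/- Let θ_1, ..., θ_n ∈ (0, π/2) satisfy ∑_k cos²θ_k = 1, let r² = 1/(∑_k sin²2θ_k), c_k = r sin 2θ_k, and g = 2r·sinθ_1···sinθ_n. Then g ≥ c_k for every k. -/

import Mathlib

open Finset Real

lemma aux_one_sub_sum_le_prod {ι : Type*} (s : Finset ι) (x : ι → ℝ)
    (h0 : ∀ i ∈ s, 0 ≤ x i) (h1 : ∀ i ∈ s, x i ≤ 1) :
    1 - ∑ i ∈ s, x i ≤ ∏ i ∈ s, (1 - x i) := by
  induction s using Finset.cons_induction with
  | empty => simp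
  | cons a s ha ih =>
    rw [Finset.sum_cons, Finset.prod_cons]
    have h0a := h0 a (Finset.mem_cons_self a s)
    have h1a := h1 a (Finset.mem_cons_self a s)
    have ih' := ih (fun i hi => h0 i (Finset.mem_cons_of_mem hi))
      (fun i hi => h1 i (Finset.mem_cons_of_mem hi))
    have hsnn : 0 ≤ ∑ i ∈ s, x i :=
      Finset.sum_nonneg fun i hi => h0 i (Finset.mem_cons_of_mem hi)
    nlinarith [mul_le_mul_of_nonneg_left ih' (by linarith : (0:ℝ) ≤ 1 - x a)]

theorem overlap_ge_coeff (n : ℕ) (θ : Fin n → ℝ)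
    (hθ : ∀ k, θ k ∈ Set.Ioo (0 : ℝ) (π / 2))
    (hsum : ∑ k, Real.cos (θ k) ^ 2 = 1)
    (r : ℝ) (hr : 0 < r)
    (hr2 : r ^ 2 = 1 / ∑ k, Real.sin (2 * θ k) ^ 2)
    (c : Fin n → ℝ) (hc : ∀ k, c k = r * Real.sin (2 * θ k))
    (g : ℝ) (hg : g = 2 * r * ∏ k, Real.sin (θ k)) :
    ∀ k, g ≥ c k := by
  intro k
  have hsin : ∀ j, 0 < Real.sin (θ j) := fun j =>
    Real.sin_pos_of_pos_of_lt_pi (hθ j).1 (lt_trans (hθ j).2 (by linarith [Real.pi_pos]))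
  have hcos : ∀ j, 0 < Real.cos (θ j) := fun j =>
    Real.cos_pos_of_mem_Ioo ⟨by linarith [(hθ j).1, Real.pi_pos], (hθ j).2⟩
  -- key: cos θ k ≤ ∏_{j ≠ k} sin θ j
  have hkey : Real.cos (θ k) ≤ ∏ j ∈ Finset.univ.erase k, Real.sin (θ j) := by
    have h1 : Real.cos (θ k) ^ 2 = 1 - ∑ j ∈ Finset.univ.erase k, Real.cos (θ j) ^ 2 := by
      have := Finset.add_sum_erase Finset.univ (fun j => Real.cos (θ j) ^ 2)
        (Finset.mem_univ k)
      rw [hsum] at this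
      linarith
    have h2 : 1 - ∑ j ∈ Finset.univ.erase k, Real.cos (θ j) ^ 2 ≤
        ∏ j ∈ Finset.univ.erase k, (1 - Real.cos (θ j) ^ 2) := by
      apply aux_one_sub_sum_le_prod
      · exact fun j _ => sq_nonneg _
      · exact fun j _ => by nlinarith [Real.cos_le_one (θ j), hcos j]
    have h3 : ∀ j, 1 - Real.cos (θ j) ^ 2 = Real.sin (θ j) ^ 2 := fun j => by
      nlinarith [Real.sin_sq_add_cos_sq (θ j)]
    have h4 : Real.cos (θ k) ^ 2 ≤ (∏ j ∈ Finset.univ.erase k, Real.sin (θ j)) ^ 2 := by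
      rw [← Finset.prod_pow]
      calc Real.cos (θ k) ^ 2 ≤ ∏ j ∈ Finset.univ.erase k, (1 - Real.cos (θ j) ^ 2) :=
            h1 ▸ h2
        _ = ∏ j ∈ Finset.univ.erase k, Real.sin (θ j) ^ 2 := by
            exact Finset.prod_congr rfl fun j _ => h3 j
    have hpnn : 0 ≤ ∏ j ∈ Finset.univ.erase k, Real.sin (θ j) :=
      Finset.prod_nonneg fun j _ => (hsin j).le
    nlinarith [hcos k, hpnn, h4]
  have hprod : ∏ j, Real.sin (θ j) =
      Real.sin (θ k) * ∏ j ∈ Finset.univ.erase k, Real.sin (θ j) :=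
    (Finset.mul_prod_erase Finset.univ (fun j => Real.sin (θ j)) (Finset.mem_univ k)).symm
  rw [hg, hc k, Real.sin_two_mul, hprod, ge_iff_le]
  have := mul_le_mul_of_nonneg_left hkey (hsin k).le
  nlinarith [hsin k, hr]
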